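/- For every k ≥ 2, the tree R_k admits a b-coloring with k colors; consequently b(R_k) ≥ k. -/
import Mathlib


open SimpleGraph

/-- The degree of a vertex `v` in a simple graph `G`. -/
noncomputable def vdeg {V : Type*} (G : SimpleGraph V) (v : V) : ℕ :=
  Nat.card {w // G.Adj v w}

/-- A Grundy coloring of `G` with `k` colors: a proper coloring whose `k` color classes are
all nonempty (surjectivity) and such that every vertex of a class has a neighbor in every
smaller-indexed class. -/
def IsGrundyColoring {V : Type*} (G : SimpleGraph V) {k : ℕ} (C : V → Fin k) : Prop :=
  (∀ v w, G.Adj v w → C v ≠ C w) ∧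
  Function.Surjective C ∧
  (∀ v : V, ∀ i : Fin k, i < C v → ∃ w, G.Adj v w ∧ C w = i)

/-- The Grundy number of `G`: the largest `k` admitting a Grundy coloring with `k` colors. -/
noncomputable def grundyNum {V : Type*} (G : SimpleGraph V) : ℕ :=
  sSup {k | ∃ C : V → Fin k, IsGrundyColoring G C}

/-- A b-coloring of `G` with `k` colors: a proper coloring such that every color class
contains a vertex having a neighbor in each of the other classes (hence all classes are
nonempty). -/
def IsBColoring {V : Type*} (G : SimpleGraph V) {k : ℕ} (C : V → Fin k) : Prop :=
  (∀ v w, G.Adj v w → C v ≠ C w) ∧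
  (∀ i : Fin k, ∃ v, C v = i ∧ ∀ j : Fin k, j ≠ i → ∃ w, G.Adj v w ∧ C w = j)

/-- The b-chromatic number of `G`: the largest `k` admitting a b-coloring with `k` colors. -/
noncomputable def bChrom {V : Type*} (G : SimpleGraph V) : ℕ :=
  sSup {k | ∃ C : V → Fin k, IsBColoring G C}

/-- The tree `R_k` of radius two: a root (`none`), its `k - 1` children
(`some (Sum.inl i)`), and `k - 2` leaves attached to each child
(`some (Sum.inr (i, j))` is a leaf attached to child `i`). -/
def Rtree (k : ℕ) : SimpleGraph (Option (Fin (k - 1) ⊕ Fin (k - 1) × Fin (k - 2))) :=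
  SimpleGraph.fromRel (fun a b =>
    match a, b with
    | none, some (Sum.inl _) => True
    | some (Sum.inl i), some (Sum.inr (i', _)) => i = i'
    | _, _ => False)

/-- For every `k ≥ 2`, the tree `R_k` admits a b-coloring with `k` colors; consequently
`b(R_k) ≥ k`. -/
theorem stmt12 (k : ℕ) (hk : 2 ≤ k) :
    (∃ C : Option (Fin (k - 1) ⊕ Fin (k - 1) × Fin (k - 2)) → Fin k,
      IsBColoring (Rtree k) C) ∧ k ≤ bChrom (Rtree k) := by
  classical
  -- the coloring
  set C : Option (Fin (k - 1) ⊕ Fin (k - 1) × Fin (k - 2)) → Fin k := fun v =>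
    match v with
    | none => ⟨0, by omega⟩
    | some (Sum.inl i) => ⟨i.val + 1, by have := i.isLt; omega⟩
    | some (Sum.inr (i, j)) =>
        if j.val < i.val then ⟨j.val + 1, by have := j.isLt; omega⟩
        else ⟨j.val + 2, by have := j.isLt; omega⟩ with hC
  have hCnone : C none = ⟨0, by omega⟩ := rfl
  have hCinl : ∀ i, C (some (Sum.inl i)) = ⟨i.val + 1, by have := i.isLt; omega⟩ :=
    fun _ => rfl
  have hCinr : ∀ i j, C (some (Sum.inr (i, j))) =
      if j.val < i.val then ⟨j.val + 1, by have := j.isLt; omega⟩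
      else ⟨j.val + 2, by have := j.isLt; omega⟩ := fun _ _ => rfl
  have hadj1 : ∀ i, (Rtree k).Adj none (some (Sum.inl i)) := by
    intro i
    rw [Rtree, fromRel_adj]
    exact ⟨by simp, Or.inl trivial⟩
  have hadj2 : ∀ i j, (Rtree k).Adj (some (Sum.inl i)) (some (Sum.inr (i, j))) := by
    intro i j
    rw [Rtree, fromRel_adj]
    exact ⟨by simp, Or.inl rfl⟩
  have hproper : ∀ v w, (Rtree k).Adj v w → C v ≠ C w := by
    intro v w h
    rw [Rtree, fromRel_adj] at h
    obtain ⟨hne, h⟩ := h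
    rcases v with _ | (i | ⟨i, j⟩) <;> rcases w with _ | (i' | ⟨i', j'⟩) <;>
      simp only [] at h <;> try simp at h
    all_goals try subst h
    all_goals simp only [hCnone, hCinl, hCinr, ne_eq]
    all_goals first
      | (split <;> simp [Fin.ext_iff] <;> omega)
      | (simp [Fin.ext_iff])
  have hb : IsBColoring (Rtree k) C := by
    refine ⟨hproper, fun i => ?_⟩
    rcases Nat.eq_zero_or_pos i.val with h0 | hpos
    · -- class 0: the root dominates
      refine ⟨none, by simp [hCnone, Fin.ext_iff, h0], fun jj hjj => ?_⟩
      have hjjv : 0 < jj.val := by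
        rcases Nat.eq_zero_or_pos jj.val with h | h
        · exact absurd (Fin.ext (by omega)) hjj
        · exact h
      have hlt : jj.val - 1 < k - 1 := by have := jj.isLt; omega
      refine ⟨some (Sum.inl ⟨jj.val - 1, hlt⟩), hadj1 _, ?_⟩
      simp [hCinl, Fin.ext_iff]; omega
    · -- class i = c+1: child c dominates
      have hlt : i.val - 1 < k - 1 := by have := i.isLt; omega
      refine ⟨some (Sum.inl ⟨i.val - 1, hlt⟩), by simp [hCinl, Fin.ext_iff]; omega,
        fun jj hjj => ?_⟩
      rcases Nat.eq_zero_or_pos jj.val with h0' | hpos'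
      · exact ⟨none, ((Rtree k).adj_symm (hadj1 _)), by simp [hCnone, Fin.ext_iff]; omega⟩
      · have hd : jj.val ≠ i.val := fun h => hjj (Fin.ext h)
        rcases lt_or_gt_of_ne hd with hlt' | hgt'
        · have hdd : jj.val - 1 < k - 2 := by omega
          refine ⟨some (Sum.inr (⟨i.val - 1, hlt⟩, ⟨jj.val - 1, hdd⟩)), hadj2 _ _, ?_⟩
          rw [hCinr, if_pos (by simp; omega)]
          simp [Fin.ext_iff]; omega
        · have hdd : jj.val - 2 < k - 2 := by have := jj.isLt; omega
          refine ⟨some (Sum.inr (⟨i.val - 1, hlt⟩, ⟨jj.val - 2, hdd⟩)), hadj2 _ _, ?_⟩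
          rw [hCinr, if_neg (by simp; omega)]
          simp [Fin.ext_iff]; omega
  refine ⟨⟨C, hb⟩, ?_⟩
  have hbdd : BddAbove {m | ∃ C : Option (Fin (k - 1) ⊕ Fin (k - 1) × Fin (k - 2)) → Fin m,
      IsBColoring (Rtree k) C} := by
    refine ⟨Fintype.card (Option (Fin (k - 1) ⊕ Fin (k - 1) × Fin (k - 2))), fun m hm => ?_⟩
    obtain ⟨D, _, hdom⟩ := hm
    have hsurj : Function.Surjective D := by
      intro i
      obtain ⟨v, hv, _⟩ := hdom i
      exact ⟨v, hv⟩
    calc m = Fintype.card (Fin m) := (Fintype.card_fin m).symm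
      _ ≤ _ := Fintype.card_le_of_surjective D hsurj
  exact le_csSup hbdd ⟨C, hb⟩
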